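/- For n ≥ 3 and fixed r ∈ (0,1), as m → +∞ the type II Yamabe energy of the Schwarzschild metric on the annulus A_{r,1} converges to 2(n-1)(2 - r - r^{n-2}) Vol(S^{n-1})^{1/(n-1)} / (1 + r^{n-1})^{(n-2)/(n-1)}, and this limit is strictly greater than the energy of the flat metric, E(δ|_{A_{r,1}}) = 2(n-1)(1 - r^{n-2}) Vol(S^{n-1})^{1/(n-1)} / (1 + r^{n-1})^{(n-2)/(n-1)}. Consequently there exists m₀ such that for all m ≥ m₀, E(g_{r,m}) > E(δ|_{A_{r,1}}) > 0, so g_{r,m} is not a type II Yamabe metric. -/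

import Mathlib

open Real Filter Topology

/-- Auxiliary function: the Yamabe energy expressed in the variable `t = 1/m`. -/
noncomputable def auxG (r ρ K α β C : ℝ) (t : ℝ) : ℝ :=
  C * ((1 - K * t - r / 2) * (t + 1 / (2 * ρ)) + t ^ 2 - 1 / 4) /
    ((t + 1 / 2) ^ α + (t + 1 / (2 * ρ)) ^ α * K) ^ β

private lemma aux_alg (c x ρ B : ℝ) (hρ : ρ ≠ 0) (hB : B ≠ 0) :
    c * (x / (4 * ρ)) / ((1 / 4) * (B / ρ)) = c * x / B := by
  field_simp

set_option maxHeartbeats 2000000 in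
/-- As `m → +∞`, the type II Yamabe energy `Esch m` of the Schwarzschild metric
`g_{r,m}` on the annulus `A_{r,1}` converges to
`L = 2(n-1)(2 - r - r^{n-2}) V^{1/(n-1)} / (1 + r^{n-1})^{(n-2)/(n-1)}` (where `V` is the
volume of the unit `(n-1)`-sphere), and `L` is strictly greater than the flat energy
`Eflat = 2(n-1)(1 - r^{n-2}) V^{1/(n-1)} / (1 + r^{n-1})^{(n-2)/(n-1)} > 0`. Consequently
there is `m₀` with `Esch m > Eflat` for all `m ≥ m₀`, so `g_{r,m}` is not a type II Yamabe
metric (it fails to minimize the energy in its conformal class, which contains the flat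
metric). -/
theorem stmt12 (n : ℕ) (hn : 3 ≤ n) (r : ℝ) (hr : 0 < r) (hr1 : r < 1) (V : ℝ) (hV : 0 < V)
    (Esch : ℝ → ℝ)
    (hE : ∀ m : ℝ, Esch m = 2 * ((n : ℝ) - 1) * V ^ ((1 : ℝ) / ((n : ℝ) - 1)) *
      ((m - r ^ (n - 1) - (m / 2) * r) * (1 + m / (2 * r ^ (n - 2))) + 1 - m ^ 2 / 4) /
      ((1 + m / 2) ^ ((2 * ((n : ℝ) - 1)) / ((n : ℝ) - 2)) +
        (1 + m / (2 * r ^ (n - 2))) ^ ((2 * ((n : ℝ) - 1)) / ((n : ℝ) - 2)) * r ^ (n - 1)) ^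
        (((n : ℝ) - 2) / ((n : ℝ) - 1)))
    (Eflat L : ℝ)
    (hEflat : Eflat = 2 * ((n : ℝ) - 1) * (1 - r ^ (n - 2)) * V ^ ((1 : ℝ) / ((n : ℝ) - 1)) /
      (1 + r ^ (n - 1)) ^ (((n : ℝ) - 2) / ((n : ℝ) - 1)))
    (hL : L = 2 * ((n : ℝ) - 1) * (2 - r - r ^ (n - 2)) * V ^ ((1 : ℝ) / ((n : ℝ) - 1)) /
      (1 + r ^ (n - 1)) ^ (((n : ℝ) - 2) / ((n : ℝ) - 1))) :
    Tendsto Esch atTop (𝓝 L) ∧ Eflat < L ∧ 0 < Eflat ∧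
    ∃ m₀ : ℝ, ∀ m ≥ m₀, Eflat < Esch m := by
  have h1n : 1 ≤ n := by omega
  have h2n : 2 ≤ n := by omega
  have hn3 : (3 : ℝ) ≤ (n : ℝ) := by exact_mod_cast hn
  have hn1 : (0 : ℝ) < (n : ℝ) - 1 := by linarith
  have hn2 : (0 : ℝ) < (n : ℝ) - 2 := by linarith
  have hn1' : ((n : ℝ) - 1) ≠ 0 := hn1.ne'
  have hn2' : ((n : ℝ) - 2) ≠ 0 := hn2.ne'
  have hc1 : ((n - 1 : ℕ) : ℝ) = (n : ℝ) - 1 := by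
    rw [Nat.cast_sub h1n, Nat.cast_one]
  have hc2 : ((n - 2 : ℕ) : ℝ) = (n : ℝ) - 2 := by
    rw [Nat.cast_sub h2n]; norm_num
  set α : ℝ := (2 * ((n : ℝ) - 1)) / ((n : ℝ) - 2) with hα
  set β : ℝ := ((n : ℝ) - 2) / ((n : ℝ) - 1) with hβ
  set C : ℝ := 2 * ((n : ℝ) - 1) * V ^ ((1 : ℝ) / ((n : ℝ) - 1)) with hCdef
  clear_value α β C
  have hαpos : 0 < α := by rw [hα]; positivity
  have hβpos : 0 < β := by rw [hβ]; exact div_pos hn2 hn1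
  have hαβ : α * β = 2 := by
    rw [hα, hβ]; field_simp
  have hρ : (0 : ℝ) < r ^ (n - 2) := pow_pos hr _
  have hK : (0 : ℝ) < r ^ (n - 1) := pow_pos hr _
  have hρ1 : r ^ (n - 2) < 1 := pow_lt_one₀ hr.le hr1 (by omega)
  have h2ρ : (0 : ℝ) < 2 * r ^ (n - 2) := by linarith
  have hq : (0 : ℝ) < 1 / (2 * r ^ (n - 2)) := div_pos one_pos h2ρ
  have h1K : (0 : ℝ) < 1 + r ^ (n - 1) := by linarith
  have hVp : (0 : ℝ) < V ^ ((1 : ℝ) / ((n : ℝ) - 1)) := Real.rpow_pos_of_pos hV _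
  have hC : 0 < C := by rw [hCdef]; have := hVp; nlinarith
  have hKβ : (r ^ (n - 1) : ℝ) ^ β = r ^ (n - 2) := by
    rw [← Real.rpow_natCast r (n - 1), ← Real.rpow_mul hr.le, hc1]
    rw [show ((n : ℝ) - 1) * β = ((n - 2 : ℕ) : ℝ) by rw [hc2, hβ]; field_simp]
    exact Real.rpow_natCast r (n - 2)
  have hρα : ((r ^ (n - 2) : ℝ)) ^ α = (r ^ (n - 1)) ^ 2 := by
    rw [← Real.rpow_natCast r (n - 2), ← Real.rpow_mul hr.le, hc2]
    rw [show ((n : ℝ) - 2) * α = (((n - 1) * 2 : ℕ) : ℝ) by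
      rw [Nat.cast_mul, hc1, hα]; field_simp; ring]
    rw [Real.rpow_natCast, pow_mul]
  have hrpow2 : ∀ x : ℝ, x ^ (2 : ℝ) = x ^ 2 := by
    intro x
    rw [show (2 : ℝ) = ((2 : ℕ) : ℝ) by norm_num, Real.rpow_natCast]
  -- Step A: for m ≥ 1, Esch m = auxG ... m⁻¹
  have key : ∀ m : ℝ, 1 ≤ m →
      Esch m = auxG r (r ^ (n - 2)) (r ^ (n - 1)) α β C m⁻¹ := by
    intro m hm
    have hm0 : 0 < m := lt_of_lt_of_le one_pos hm
    have hmne : m ≠ 0 := hm0.ne'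
    have hti : 0 < m⁻¹ := inv_pos.mpr hm0
    have hb1p : (0 : ℝ) < m⁻¹ + 1 / 2 := by linarith
    have hb2p : (0 : ℝ) < m⁻¹ + 1 / (2 * r ^ (n - 2)) := by linarith
    rw [hE]
    simp only [auxG]
    have e3 : (1 + m / 2) ^ α = m ^ α * (m⁻¹ + 1 / 2) ^ α := by
      rw [show (1 + m / 2 : ℝ) = m * (m⁻¹ + 1 / 2) by field_simp,
        Real.mul_rpow hm0.le hb1p.le]
    have e4 : (1 + m / (2 * r ^ (n - 2))) ^ α
        = m ^ α * (m⁻¹ + 1 / (2 * r ^ (n - 2))) ^ α := by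
      rw [show (1 + m / (2 * r ^ (n - 2)) : ℝ)
          = m * (m⁻¹ + 1 / (2 * r ^ (n - 2))) by field_simp,
        Real.mul_rpow hm0.le hb2p.le]
    have hA : (0 : ℝ) < (m⁻¹ + 1 / 2) ^ α := Real.rpow_pos_of_pos hb1p α
    have hB : (0 : ℝ) < (m⁻¹ + 1 / (2 * r ^ (n - 2))) ^ α := Real.rpow_pos_of_pos hb2p α
    have e6 : ((1 + m / 2) ^ α + (1 + m / (2 * r ^ (n - 2))) ^ α * r ^ (n - 1)) ^ β
        = m ^ 2 * ((m⁻¹ + 1 / 2) ^ α + (m⁻¹ + 1 / (2 * r ^ (n - 2))) ^ α * r ^ (n - 1)) ^ β := by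
      rw [e3, e4, show m ^ α * (m⁻¹ + 1 / 2) ^ α
            + m ^ α * (m⁻¹ + 1 / (2 * r ^ (n - 2))) ^ α * r ^ (n - 1)
          = m ^ α * ((m⁻¹ + 1 / 2) ^ α + (m⁻¹ + 1 / (2 * r ^ (n - 2))) ^ α * r ^ (n - 1)) by
            ring,
        Real.mul_rpow (Real.rpow_pos_of_pos hm0 α).le
          (add_pos hA (mul_pos hB hK)).le,
        ← Real.rpow_mul hm0.le, hαβ, hrpow2 m]
    have e7 : (m - r ^ (n - 1) - m / 2 * r) * (1 + m / (2 * r ^ (n - 2))) + 1 - m ^ 2 / 4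
        = m ^ 2 * ((1 - r ^ (n - 1) * m⁻¹ - r / 2) * (m⁻¹ + 1 / (2 * r ^ (n - 2)))
            + m⁻¹ ^ 2 - 1 / 4) := by
      field_simp
    rw [e6, e7, show C * (m ^ 2 * ((1 - r ^ (n - 1) * m⁻¹ - r / 2)
          * (m⁻¹ + 1 / (2 * r ^ (n - 2))) + m⁻¹ ^ 2 - 1 / 4))
        = m ^ 2 * (C * ((1 - r ^ (n - 1) * m⁻¹ - r / 2)
          * (m⁻¹ + 1 / (2 * r ^ (n - 2))) + m⁻¹ ^ 2 - 1 / 4)) by ring]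
    exact mul_div_mul_left _ _ (pow_ne_zero 2 hmne)
  -- Step B: continuity of auxG at 0
  have hbase0 : (0 : ℝ) < ((0 : ℝ) + 1 / 2) ^ α
      + ((0 : ℝ) + 1 / (2 * r ^ (n - 2))) ^ α * r ^ (n - 1) :=
    add_pos (Real.rpow_pos_of_pos (by norm_num) α)
      (mul_pos (Real.rpow_pos_of_pos (by linarith) α) hK)
  have hcont : ContinuousAt (auxG r (r ^ (n - 2)) (r ^ (n - 1)) α β C) 0 := by
    show ContinuousAt (fun t : ℝ => auxG r (r ^ (n - 2)) (r ^ (n - 1)) α β C t) 0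
    simp only [auxG]
    have hb1 : ContinuousAt (fun t : ℝ => (t + 1 / 2) ^ α) 0 :=
      (continuousAt_id.add continuousAt_const).rpow_const (Or.inr hαpos.le)
    have hb2 : ContinuousAt (fun t : ℝ => (t + 1 / (2 * r ^ (n - 2))) ^ α) 0 :=
      (continuousAt_id.add continuousAt_const).rpow_const (Or.inr hαpos.le)
    have hb3 : ContinuousAt (fun t : ℝ =>
        ((t + 1 / 2) ^ α + (t + 1 / (2 * r ^ (n - 2))) ^ α * r ^ (n - 1)) ^ β) 0 :=
      (hb1.add (hb2.mul continuousAt_const)).rpow_const (Or.inr hβpos.le)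
    have hnum : ContinuousAt (fun t : ℝ =>
        C * ((1 - r ^ (n - 1) * t - r / 2) * (t + 1 / (2 * r ^ (n - 2))) + t ^ 2 - 1 / 4)) 0 := by
      fun_prop
    exact hnum.div hb3 (Real.rpow_pos_of_pos hbase0 β).ne'
  -- Step C: value of auxG at 0 is L
  have hBne : ((1 : ℝ) + r ^ (n - 1)) ^ β ≠ 0 := (Real.rpow_pos_of_pos h1K β).ne'
  have hval : auxG r (r ^ (n - 2)) (r ^ (n - 1)) α β C 0 = L := by
    simp only [auxG]
    have hS0 : ((0 : ℝ) + 1 / 2) ^ α + ((0 : ℝ) + 1 / (2 * r ^ (n - 2))) ^ α * r ^ (n - 1)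
        = (1 / 2 : ℝ) ^ α * (1 + (r ^ (n - 1))⁻¹) := by
      rw [zero_add, zero_add,
        show (1 / (2 * r ^ (n - 2)) : ℝ) = (1 / 2) * (r ^ (n - 2))⁻¹ by
          field_simp,
        Real.mul_rpow (by norm_num) (inv_nonneg.mpr hρ.le), Real.inv_rpow hρ.le, hρα]
      field_simp [hK.ne']
    have hden : (((0 : ℝ) + 1 / 2) ^ α
          + ((0 : ℝ) + 1 / (2 * r ^ (n - 2))) ^ α * r ^ (n - 1)) ^ β
        = (1 / 4) * ((1 + r ^ (n - 1)) ^ β / r ^ (n - 2)) := by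
      rw [hS0, Real.mul_rpow (Real.rpow_nonneg (by norm_num) α)
          (by have := inv_nonneg.mpr hK.le; linarith),
        ← Real.rpow_mul (by norm_num), hαβ, hrpow2 (1 / 2 : ℝ),
        show (1 + (r ^ (n - 1) : ℝ)⁻¹) = (1 + r ^ (n - 1)) / r ^ (n - 1) by
          field_simp; ring,
        Real.div_rpow h1K.le hK.le, hKβ]
      ring
    have hN0 : (1 - r ^ (n - 1) * 0 - r / 2) * (0 + 1 / (2 * r ^ (n - 2))) + 0 ^ 2 - 1 / 4
        = (2 - r - r ^ (n - 2)) / (4 * r ^ (n - 2)) := by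
      field_simp
      ring
    rw [hN0, hden,
      aux_alg C (2 - r - r ^ (n - 2)) (r ^ (n - 2)) ((1 + r ^ (n - 1)) ^ β) hρ.ne' hBne,
      hL, hCdef]
    ring
  -- convergence
  have htend : Tendsto Esch atTop (𝓝 L) := by
    have h1 : Tendsto (fun m : ℝ => auxG r (r ^ (n - 2)) (r ^ (n - 1)) α β C m⁻¹)
        atTop (𝓝 L) := by
      rw [← hval]
      exact hcont.tendsto.comp tendsto_inv_atTop_zero
    exact h1.congr' (by
      filter_upwards [eventually_ge_atTop (1 : ℝ)] with m hm using (key m hm).symm)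
  -- strict inequalities
  have hBpos : (0 : ℝ) < (1 + r ^ (n - 1)) ^ β := Real.rpow_pos_of_pos h1K β
  have hEfL : Eflat < L := by
    have hnum : 2 * ((n : ℝ) - 1) * (1 - r ^ (n - 2)) * V ^ ((1 : ℝ) / ((n : ℝ) - 1))
        < 2 * ((n : ℝ) - 1) * (2 - r - r ^ (n - 2)) * V ^ ((1 : ℝ) / ((n : ℝ) - 1)) := by
      nlinarith [mul_pos (mul_pos (by linarith : (0 : ℝ) < 2 * ((n : ℝ) - 1)) hVp)
        (by linarith : (0 : ℝ) < 1 - r)]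
    rw [hEflat, hL]
    exact div_lt_div_of_pos_right hnum hBpos
  have hEf0 : 0 < Eflat := by
    have hnum : (0 : ℝ) < 2 * ((n : ℝ) - 1) * (1 - r ^ (n - 2)) * V ^ ((1 : ℝ) / ((n : ℝ) - 1)) := by
      have h1ρ : (0 : ℝ) < 1 - r ^ (n - 2) := by linarith
      nlinarith
    rw [hEflat]
    exact div_pos hnum hBpos
  refine ⟨htend, hEfL, hEf0, ?_⟩
  have hev : ∀ᶠ m in atTop, Eflat < Esch m := htend.eventually (eventually_gt_nhds hEfL)
  exact eventually_atTop.mp hev
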